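/- Let k ≥ 1 and γ₀ ≥ 3. Then the sum ∑_{n ≥ ⌈log γ₀⌉} exp(−k n²/2) · log(n + γ₀) is at most 1/2. -/
import Mathlib

open Real

private lemma exp_one_ge_27 : (2.7:ℝ) ≤ Real.exp 1 := by
  have := Real.exp_one_gt_d9; linarith

/-- majorant -/
private noncomputable def gmaj : ℕ → ℝ := fun n =>
  if n = 2 then 3 * Real.exp (-2) else if 3 ≤ n then Real.exp (-(n:ℝ)) else 0

private lemma gmaj_nonneg (n : ℕ) : 0 ≤ gmaj n := by
  unfold gmaj; split_ifs <;> positivity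

private lemma gmaj_shift (i : ℕ) :
    gmaj (i + 3) = Real.exp (-3) * (Real.exp (-1)) ^ i := by
  unfold gmaj
  rw [if_neg (by omega), if_pos (by omega), ← Real.exp_nat_mul, ← Real.exp_add]
  congr 1
  push_cast
  ring

private lemma summable_gmaj : Summable gmaj := by
  rw [← summable_nat_add_iff 3]
  simp only [gmaj_shift]
  exact (summable_geometric_of_lt_one (by positivity)
    (by rw [Real.exp_lt_one_iff]; norm_num)).mul_left _

private lemma tsum_gmaj_le : (∑' n, gmaj n) ≤ 1 / 2 := by
  have hs := summable_gmaj
  rw [← Summable.sum_add_tsum_nat_add 3 hs]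
  simp only [gmaj_shift]
  rw [tsum_mul_left, tsum_geometric_of_lt_one (by positivity)
    (by rw [Real.exp_lt_one_iff]; norm_num)]
  have h0 : gmaj 0 = 0 := by unfold gmaj; norm_num
  have h1 : gmaj 1 = 0 := by unfold gmaj; norm_num
  have h2 : gmaj 2 = 3 * Real.exp (-2) := by unfold gmaj; norm_num
  rw [Finset.sum_range_succ, Finset.sum_range_succ, Finset.sum_range_one, h0, h1, h2]
  have key : 3 * Real.exp (-2) + Real.exp (-3) * (1 - Real.exp (-1))⁻¹ ≤ 1 / 2 := by
    set E := Real.exp 1 with hEdef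
    have hE : (2.7:ℝ) ≤ E := exp_one_ge_27
    have hEpos : (0:ℝ) < E := Real.exp_pos 1
    have he2 : Real.exp (-2) = (E * E)⁻¹ := by
      rw [Real.exp_neg, ← Real.exp_add]; norm_num
    have he3 : Real.exp (-3) = (E * E * E)⁻¹ := by
      rw [Real.exp_neg, ← Real.exp_add, ← Real.exp_add]; norm_num
    have he1 : Real.exp (-1) = E⁻¹ := Real.exp_neg 1
    rw [he1, he2, he3]
    have hd : (0:ℝ) < 1 - E⁻¹ := by
      have h1 : E⁻¹ ≤ (2.7:ℝ)⁻¹ := by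
        apply inv_anti₀ (by norm_num) hE
      nlinarith
    have hE1 : (0:ℝ) < E - 1 := by linarith
    have hrw : (1:ℝ) - E⁻¹ = (E - 1)/E := by field_simp
    rw [hrw, inv_div, ← sub_nonneg]
    have hq : 1/2 - (3 * (E * E)⁻¹ + (E * E * E)⁻¹ * (E / (E - 1)))
        = (E * E * (E - 1) - 6 * (E - 1) - 2) / (2 * (E * E) * (E - 1)) := by
      field_simp
      ring
    rw [hq]
    apply div_nonneg _ (by positivity)
    nlinarith
  linarith [key]

theorem gaussian_tail_sum_small (k γ₀ : ℝ) (hk : 1 ≤ k) (hγ₀ : 3 ≤ γ₀) :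
    (∑' n : ℕ, if ⌈Real.log γ₀⌉₊ ≤ n then
        Real.exp (-(k * (n : ℝ) ^ 2 / 2)) * Real.log ((n : ℝ) + γ₀) else 0) ≤ 1 / 2 := by
  have hγpos : (0:ℝ) < γ₀ := by linarith
  have hE : (2.7:ℝ) ≤ Real.exp 1 := exp_one_ge_27
  have hlog3 : (1:ℝ) < Real.log γ₀ := by
    have h3 : Real.exp 1 < γ₀ := lt_of_lt_of_le (lt_of_lt_of_le Real.exp_one_lt_d9
      (by norm_num)) hγ₀
    calc (1:ℝ) = Real.log (Real.exp 1) := (Real.log_exp 1).symm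
    _ < Real.log γ₀ := Real.log_lt_log (Real.exp_pos 1) h3
  have hN2 : 2 ≤ ⌈Real.log γ₀⌉₊ := by
    have : 1 < ⌈Real.log γ₀⌉₊ := Nat.lt_ceil.mpr (by exact_mod_cast hlog3)
    omega
  set f : ℕ → ℝ := fun n => if ⌈Real.log γ₀⌉₊ ≤ n then
      Real.exp (-(k * (n : ℝ) ^ 2 / 2)) * Real.log ((n : ℝ) + γ₀) else 0 with hf
  have hfnn : ∀ n, 0 ≤ f n := by
    intro n
    simp only [hf]
    split_ifs with h
    · apply mul_nonneg (Real.exp_pos _).le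
      apply Real.log_nonneg
      have : (0:ℝ) ≤ (n:ℝ) := Nat.cast_nonneg n
      linarith
    · exact le_refl 0
  have hfg : ∀ n, f n ≤ gmaj n := by
    intro n
    simp only [hf]
    split_ifs with h
    · -- N ≤ n
      have hn2 : 2 ≤ n := le_trans hN2 h
      have hγe : γ₀ ≤ Real.exp n := by
        have h1 : Real.log γ₀ ≤ (⌈Real.log γ₀⌉₊ : ℝ) := Nat.le_ceil _
        have h2 : Real.log γ₀ ≤ (n:ℝ) := h1.trans (by exact_mod_cast h)
        calc γ₀ = Real.exp (Real.log γ₀) := (Real.exp_log hγpos).symm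
        _ ≤ Real.exp n := Real.exp_le_exp.mpr h2
      have hlognn : 0 ≤ Real.log ((n:ℝ) + γ₀) := by
        apply Real.log_nonneg
        have : (0:ℝ) ≤ (n:ℝ) := Nat.cast_nonneg n
        linarith
      rcases eq_or_lt_of_le hn2 with h2 | h3
      · -- n = 2
        have hn : n = 2 := h2.symm
        subst hn
        have hgm : gmaj 2 = 3 * Real.exp (-2) := by unfold gmaj; norm_num
        rw [hgm]
        push_cast at hγe hlognn ⊢
        have hexp : Real.exp (-(k * (2:ℝ)^2/2)) ≤ Real.exp (-2) :=
          Real.exp_le_exp.mpr (by nlinarith)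
        have he2 : Real.exp 2 = Real.exp 1 * Real.exp 1 := by
          rw [← Real.exp_add]; norm_num
        have he3 : Real.exp 3 = Real.exp 2 * Real.exp 1 := by
          rw [← Real.exp_add]; norm_num
        have hlog : Real.log ((2:ℝ) + γ₀) ≤ 3 := by
          have h1 : (2:ℝ) + γ₀ ≤ Real.exp 3 := by nlinarith
          calc Real.log ((2:ℝ) + γ₀) ≤ Real.log (Real.exp 3) :=
            Real.log_le_log (by linarith) h1
          _ = 3 := Real.log_exp 3
        calc Real.exp (-(k * (2:ℝ)^2/2)) * Real.log ((2:ℝ) + γ₀)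
            ≤ Real.exp (-2) * 3 := mul_le_mul hexp hlog hlognn (Real.exp_pos _).le
        _ = 3 * Real.exp (-2) := by ring
      · -- 3 ≤ n
        have hn3 : 3 ≤ n := h3
        have hn3' : (3:ℝ) ≤ (n:ℝ) := by exact_mod_cast hn3
        have hgm : gmaj n = Real.exp (-(n:ℝ)) := by
          unfold gmaj
          rw [if_neg (by omega), if_pos hn3]
        rw [hgm]
        -- log bound
        have hlog : Real.log ((n:ℝ) + γ₀) ≤ (n:ℝ) + 1 := by
          have hen : (n:ℝ) + 1 ≤ Real.exp n := Real.add_one_le_exp _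
          have h1 : (n:ℝ) + γ₀ ≤ Real.exp ((n:ℝ) + 1) := by
            rw [Real.exp_add]
            nlinarith [Real.exp_pos (n:ℝ)]
          calc Real.log ((n:ℝ) + γ₀) ≤ Real.log (Real.exp ((n:ℝ)+1)) :=
            Real.log_le_log (by positivity) h1
          _ = (n:ℝ) + 1 := Real.log_exp _
        -- exp bound
        have hexp : Real.exp (-(k * (n:ℝ)^2/2)) ≤ Real.exp (-((n:ℝ)^2/2)) := by
          apply Real.exp_le_exp.mpr
          nlinarith [sq_nonneg (n:ℝ)]
        -- key: (n+1) ≤ exp(n²/2 - n)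
        have h4 : (4:ℝ) ≤ Real.exp (3/2) := by
          have hl4 : Real.log 4 ≤ 3/2 := by
            have : Real.log 4 = 2 * Real.log 2 := by
              rw [show (4:ℝ) = 2^2 by norm_num, Real.log_pow]; push_cast; ring
            rw [this]
            have := Real.log_two_lt_d9
            linarith
          calc (4:ℝ) = Real.exp (Real.log 4) := (Real.exp_log (by norm_num)).symm
          _ ≤ Real.exp (3/2) := Real.exp_le_exp.mpr hl4
        have h5 : (3*(n:ℝ) - 9)/2 + 1 ≤ Real.exp ((3*(n:ℝ)-9)/2) := by
          have := Real.add_one_le_exp ((3*(n:ℝ)-9)/2)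
          linarith
        have hkey : (n:ℝ) + 1 ≤ Real.exp ((n:ℝ)^2/2 - n) := by
          have step : (n:ℝ) + 1 ≤ Real.exp ((3*(n:ℝ)-6)/2) := by
            have hmul : (4:ℝ) * ((3*(n:ℝ)-9)/2 + 1) ≤
                Real.exp (3/2) * Real.exp ((3*(n:ℝ)-9)/2) := by
              apply mul_le_mul h4 h5 (by linarith) (Real.exp_pos _).le
            have heq : Real.exp (3/2) * Real.exp ((3*(n:ℝ)-9)/2)
                = Real.exp ((3*(n:ℝ)-6)/2) := by
              rw [← Real.exp_add]; ring_nf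
            rw [← heq]
            nlinarith
          calc (n:ℝ) + 1 ≤ Real.exp ((3*(n:ℝ)-6)/2) := step
          _ ≤ Real.exp ((n:ℝ)^2/2 - n) := Real.exp_le_exp.mpr (by nlinarith)
        calc Real.exp (-(k * (n:ℝ)^2/2)) * Real.log ((n:ℝ) + γ₀)
            ≤ Real.exp (-((n:ℝ)^2/2)) * ((n:ℝ) + 1) := by
              apply mul_le_mul hexp hlog hlognn (Real.exp_pos _).le
        _ ≤ Real.exp (-((n:ℝ)^2/2)) * Real.exp ((n:ℝ)^2/2 - n) := by
              apply mul_le_mul_of_nonneg_left hkey (Real.exp_pos _).le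
        _ = Real.exp (-(n:ℝ)) := by rw [← Real.exp_add]; ring_nf
    · exact gmaj_nonneg n
  have hsf : Summable f := Summable.of_nonneg_of_le hfnn hfg summable_gmaj
  calc (∑' n, f n) ≤ ∑' n, gmaj n := Summable.tsum_le_tsum hfg hsf summable_gmaj
  _ ≤ 1/2 := tsum_gmaj_le
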